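/- Let c, k, t be positive integers with c ≥ 2 and k ≥ t+2. Fix T ∈ U^{[ck]}_{c,t} and M ∈ U^{[ck]}_{c,k-1} with T ⊆ M, and define f₀(c,k,t) = (k-t-1)·θ(c,k,t+1) − binom(k-t-1,2)·θ(c,k,t+2) where θ(c,k,z) = (1/(k-z)!)·∏_{i=z}^{k-1} binom((k-i)c,c). Then f₀(c,k,t) = Σ_{i=1}^{k-t-1} ((3i−i²)/2)·|A_{t+i}|, where A_j = {c-uniform partitions F : T ⊆ F, |M ∩ F| = j}; in particular f₀(c,k,t) ≤ |A_{t+1}| + |A_{t+2}|. -/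

import Mathlib

open Finset

/-- `UParts c k ℓ S`: `S` is a family of `ℓ` pairwise disjoint `c`-subsets of `[ck]`. -/
def UParts (c k ℓ : ℕ) (S : Finset (Finset (Fin (c * k)))) : Prop :=
  S.card = ℓ ∧ (∀ e ∈ S, e.card = c) ∧
    ∀ e ∈ S, ∀ f ∈ S, e ≠ f → Disjoint e f

/-- `UPartition c k F`: `F` is a `c`-uniform partition of `[ck]` into `k` blocks. -/
def UPartition (c k : ℕ) (F : Finset (Finset (Fin (c * k)))) : Prop :=
  UParts c k k F ∧ ∀ x : Fin (c * k), ∃ e ∈ F, x ∈ e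

/-- Cross `t`-intersecting families: any two members from different families share `≥ t` blocks. -/
def CrossInt (c k t : ℕ) (F G : Finset (Finset (Finset (Fin (c * k))))) : Prop :=
  ∀ A ∈ F, ∀ B ∈ G, t ≤ (A ∩ B).card

/-- `S` is a `t`-cover of the family `F`: a family of pairwise disjoint `c`-subsets meeting
every member of `F` in at least `t` blocks. -/
def IsTCover (c k t : ℕ) (F : Finset (Finset (Finset (Fin (c * k)))))
    (S : Finset (Finset (Fin (c * k)))) : Prop :=
  UParts c k S.card S ∧ ∀ A ∈ F, t ≤ (S ∩ A).card

/-- The `t`-covering number: minimum size of a `t`-cover. -/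
noncomputable def tau (c k t : ℕ) (F : Finset (Finset (Finset (Fin (c * k))))) : ℕ :=
  sInf {s | ∃ S, IsTCover c k t F S ∧ S.card = s}

/-- `θ(c,k,z) = (1/(k-z)!) · ∏_{i=z}^{k-1} C((k-i)c, c)`. -/
def theta (c k z : ℕ) : ℚ :=
  (1 / ((k - z).factorial : ℚ)) * ∏ i ∈ Finset.Ico z k, ((((k - i) * c).choose c : ℕ) : ℚ)

/-- `g(c,k,t,z) = θ(c,k,z)·C(z,t)·∏_{j=1}^{z-t}(k-(t+j-1))`. -/
def gfun (c k t z : ℕ) : ℚ :=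
  theta c k z * ((z.choose t : ℕ) : ℚ) * ∏ j ∈ Finset.Icc 1 (z - t), ((k - (t + j - 1) : ℕ) : ℚ)

/-- `f₀(c,k,t) = (k-t-1)·θ(c,k,t+1) − C(k-t-1,2)·θ(c,k,t+2)`. -/
def f0 (c k t : ℕ) : ℚ :=
  ((k - t - 1 : ℕ) : ℚ) * theta c k (t + 1) - (((k - t - 1).choose 2 : ℕ) : ℚ) * theta c k (t + 2)

/-- `f₂(c,k,t) = (t+2)·θ(c,k,t+1) − (t+1)(k-t-1)·θ(c,k,t+2)`. -/
def f2q (c k t : ℕ) : ℚ :=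
  ((t : ℚ) + 2) * theta c k (t + 1) - ((t : ℚ) + 1) * ((k - t - 1 : ℕ) : ℚ) * theta c k (t + 2)

noncomputable def extFam (c k : ℕ) (S : Finset (Finset (Fin (c * k)))) :
    Finset (Finset (Finset (Fin (c * k)))) :=
  @Finset.filter _ (fun F => UPartition c k F ∧ S ⊆ F) (Classical.decPred _) Finset.univ

lemma mem_extFam {c k : ℕ} {S F : Finset (Finset (Fin (c * k)))} :
    F ∈ extFam c k S ↔ UPartition c k F ∧ S ⊆ F := by
  simp [extFam]

lemma biUnion_card {c k z : ℕ} {S : Finset (Finset (Fin (c * k)))}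
    (hS : UParts c k z S) : (S.biUnion (fun e => e)).card = z * c := by
  rw [Finset.card_biUnion (fun e he f hf hef => hS.2.2 e he f hf hef),
    Finset.sum_congr rfl (fun e he => hS.2.1 e he), Finset.sum_const, smul_eq_mul,
    hS.1]

lemma cover_of_uparts {c k : ℕ} {S : Finset (Finset (Fin (c * k)))} (hS : UParts c k k S) :
    UPartition c k S := by
  refine ⟨hS, fun x => ?_⟩
  have hcard : (S.biUnion (fun e => e)).card = c * k := by
    rw [biUnion_card hS, mul_comm]
  have huniv : S.biUnion (fun e => e) = Finset.univ :=
    Finset.eq_univ_of_card _ (by simpa using hcard)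
  have hx : x ∈ S.biUnion (fun e => e) := huniv ▸ Finset.mem_univ x
  exact Finset.mem_biUnion.mp hx

lemma choose_key {n c : ℕ} (hc : 1 ≤ c) (hn : 1 ≤ n) :
    (n * c).choose c = n * (n * c - 1).choose (c - 1) := by
  have hnc : 1 ≤ n * c := Nat.one_le_iff_ne_zero.mpr (by positivity)
  have h := Nat.add_one_mul_choose_eq (n * c - 1) (c - 1)
  rw [show n*c-1+1 = n*c from by omega, show c-1+1 = c from by omega] at h
  have h2 : c * ((n * c).choose c) = c * (n * (n * c - 1).choose (c - 1)) := by
    calc c * ((n * c).choose c) = (n * c) * (n * c - 1).choose (c - 1) := by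
          rw [h]; ring
      _ = c * (n * (n * c - 1).choose (c - 1)) := by ring
  exact Nat.eq_of_mul_eq_mul_left (by omega) h2

lemma theta_rec (c k z : ℕ) (hc : 1 ≤ c) (hzk : z < k) :
    theta c k z = ((((k - z) * c - 1).choose (c - 1) : ℕ) : ℚ) * theta c k (z + 1) := by
  have hprod : ∏ i ∈ Finset.Ico z k, ((((k - i) * c).choose c : ℕ) : ℚ) =
      ((((k - z) * c).choose c : ℕ) : ℚ) *
        ∏ i ∈ Finset.Ico (z + 1) k, ((((k - i) * c).choose c : ℕ) : ℚ) :=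
    Finset.prod_eq_prod_Ico_succ_bot hzk _
  have hn : 1 ≤ k - z := by omega
  have hkey : (((k - z) * c).choose c : ℚ) =
      ((k - z : ℕ) : ℚ) * ((((k - z) * c - 1).choose (c - 1) : ℕ) : ℚ) := by
    exact_mod_cast congrArg (Nat.cast (R := ℚ)) (choose_key hc hn)
  have hfac : ((k - z).factorial : ℚ) = ((k - z : ℕ) : ℚ) * ((k - (z + 1)).factorial : ℚ) := by
    have : (k - z) * (k - z - 1).factorial = (k - z).factorial :=
      Nat.mul_factorial_pred (by omega)
    rw [show k - (z + 1) = k - z - 1 from by omega]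
    exact_mod_cast this.symm
  have h1 : ((k - z).factorial : ℚ) ≠ 0 := Nat.cast_ne_zero.mpr (Nat.factorial_ne_zero _)
  have h2 : ((k - (z + 1)).factorial : ℚ) ≠ 0 := Nat.cast_ne_zero.mpr (Nat.factorial_ne_zero _)
  have h3 : ((k - z : ℕ) : ℚ) ≠ 0 := Nat.cast_ne_zero.mpr (by omega)
  rw [theta, theta, hprod, hkey, hfac]
  field_simp

lemma lemA (c k : ℕ) (hc : 1 ≤ c) :
    ∀ m z, z + m = k → ∀ S : Finset (Finset (Fin (c * k))), UParts c k z S →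
      ((extFam c k S).card : ℚ) = theta c k z := by
  intro m
  induction m with
  | zero =>
    intro z hz S hS
    obtain rfl : z = k := by omega
    have hfam : extFam c z S = {S} := by
      ext F
      rw [mem_extFam, Finset.mem_singleton]
      constructor
      · rintro ⟨hF, hSF⟩
        exact (Finset.eq_of_subset_of_card_le hSF (by rw [hF.1.1, hS.1])).symm
      · rintro rfl
        exact ⟨cover_of_uparts hS, Finset.Subset.refl _⟩
    rw [hfam]
    simp [theta]
  | succ m ih =>
    intro z hzk S hS
    have hzk' : z + 1 + m = k := by omega
    set U := Finset.univ \ S.biUnion (fun e => e) with hUdef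
    have hUcard : U.card = (m + 1) * c := by
      rw [hUdef, Finset.card_sdiff_of_subset (Finset.subset_univ _), biUnion_card hS]
      have h1 : (Finset.univ : Finset (Fin (c * k))).card = c * k := by simp
      have h2 : c * k = z * c + (m + 1) * c := by
        have : k = z + (m + 1) := by omega
        rw [this]; ring
      omega
    have hUpos : 0 < U.card := by
      rw [hUcard]; exact Nat.mul_pos (Nat.succ_pos m) hc
    obtain ⟨x, hxU⟩ := Finset.card_pos.mp hUpos
    have hxnb : x ∉ S.biUnion (fun e => e) := (Finset.mem_sdiff.mp hxU).2
    set B := (U.powersetCard c).filter (fun e => x ∈ e) with hBdef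
    have hmemB : ∀ e, e ∈ B ↔ (e ⊆ U ∧ e.card = c) ∧ x ∈ e := by
      intro e; rw [hBdef, Finset.mem_filter, Finset.mem_powersetCard]
    -- each e in B gives a UParts of size z+1
    have hins : ∀ e ∈ B, UParts c k (z + 1) (insert e S) := by
      intro e heB
      obtain ⟨⟨heU, hec⟩, hxe⟩ := (hmemB e).mp heB
      have heS : e ∉ S := by
        intro heS
        exact hxnb (Finset.mem_biUnion.mpr ⟨e, heS, hxe⟩)
      have hdisjU : ∀ s ∈ S, Disjoint e s := by
        intro s hsS
        have h1 : Disjoint U (S.biUnion (fun e => e)) := Finset.sdiff_disjoint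
        exact h1.mono heU (Finset.subset_biUnion_of_mem (fun e => e) hsS)
      refine ⟨by rw [Finset.card_insert_of_notMem heS, hS.1], ?_, ?_⟩
      · intro f hf
        rcases Finset.mem_insert.mp hf with rfl | hf
        · exact hec
        · exact hS.2.1 f hf
      · intro a ha b hb hab
        rcases Finset.mem_insert.mp ha with rfl | haS
        · rcases Finset.mem_insert.mp hb with rfl | hbS
          · exact absurd rfl hab
          · exact hdisjU b hbS
        · rcases Finset.mem_insert.mp hb with rfl | hbS
          · exact (hdisjU a haS).symm
          · exact hS.2.2 a haS b hbS hab
    -- decomposition of extFam S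
    have hdecomp : extFam c k S = B.biUnion (fun e => extFam c k (insert e S)) := by
      ext F
      rw [Finset.mem_biUnion, mem_extFam]
      constructor
      · rintro ⟨hF, hSF⟩
        obtain ⟨e, heF, hxe⟩ := hF.2 x
        have heU : e ⊆ U := by
          intro y hy
          rw [hUdef, Finset.mem_sdiff]
          refine ⟨Finset.mem_univ _, fun hyb => ?_⟩
          obtain ⟨s, hsS, hys⟩ := Finset.mem_biUnion.mp hyb
          rcases eq_or_ne e s with rfl | hne
          · exact hxnb (Finset.mem_biUnion.mpr ⟨e, hsS, hxe⟩)
          · exact Finset.disjoint_left.mp (hF.1.2.2 e heF s (hSF hsS) hne) hy hys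
        refine ⟨e, (hmemB e).mpr ⟨⟨heU, hF.1.2.1 e heF⟩, hxe⟩,
          mem_extFam.mpr ⟨hF, Finset.insert_subset heF hSF⟩⟩
      · rintro ⟨e, heB, hFe⟩
        obtain ⟨hF, hins'⟩ := mem_extFam.mp hFe
        exact ⟨hF, (Finset.subset_insert e S).trans hins'⟩
    -- fibers are disjoint
    have hdisjfib : ∀ e ∈ B, ∀ f ∈ B, e ≠ f →
        Disjoint (extFam c k (insert e S)) (extFam c k (insert f S)) := by
      intro e heB f hfB hef
      rw [Finset.disjoint_left]
      intro F hFe hFf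
      obtain ⟨hF, he⟩ := mem_extFam.mp hFe
      obtain ⟨_, hf⟩ := mem_extFam.mp hFf
      have hxe : x ∈ e := ((hmemB e).mp heB).2
      have hxf : x ∈ f := ((hmemB f).mp hfB).2
      exact Finset.disjoint_left.mp
        (hF.1.2.2 e (he (Finset.mem_insert_self e S)) f (hf (Finset.mem_insert_self f S)) hef)
        hxe hxf
    -- count B
    have hBcard : B.card = ((m + 1) * c - 1).choose (c - 1) := by
      have : B.card = ((U.erase x).powersetCard (c - 1)).card := by
        refine Finset.card_bij' (fun e _ => e.erase x) (fun s _ => insert x s) ?_ ?_ ?_ ?_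
        · intro e he
          obtain ⟨⟨heU, hec⟩, hxe⟩ := (hmemB e).mp he
          rw [Finset.mem_powersetCard]
          exact ⟨fun y hy => Finset.mem_erase.mpr
            ⟨(Finset.mem_erase.mp hy).1, heU (Finset.mem_erase.mp hy).2⟩,
            by rw [Finset.card_erase_of_mem hxe, hec]⟩
        · intro s hs
          obtain ⟨hsU, hsc⟩ := Finset.mem_powersetCard.mp hs
          have hxs : x ∉ s := fun hxs => (Finset.mem_erase.mp (hsU hxs)).1 rfl
          refine (hmemB _).mpr ⟨⟨?_, ?_⟩, Finset.mem_insert_self x s⟩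
          · exact Finset.insert_subset hxU (hsU.trans (Finset.erase_subset _ _))
          · rw [Finset.card_insert_of_notMem hxs, hsc]; omega
        · intro e he
          exact Finset.insert_erase ((hmemB e).mp he).2
        · intro s hs
          have hxs : x ∉ s := fun hxs =>
            (Finset.mem_erase.mp ((Finset.mem_powersetCard.mp hs).1 hxs)).1 rfl
          exact Finset.erase_insert hxs
      rw [this, Finset.card_powersetCard, Finset.card_erase_of_mem hxU, hUcard]
    -- put together
    have hzlt : z < k := by omega
    rw [hdecomp, Finset.card_biUnion hdisjfib, Nat.cast_sum]
    rw [Finset.sum_congr rfl (fun e heB => ih (z + 1) hzk' (insert e S) (hins e heB))]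
    rw [Finset.sum_const, nsmul_eq_mul, hBcard, theta_rec c k z hc hzlt]
    rw [show k - z = m + 1 from by omega]

lemma uparts_insert_sub {c k z w : ℕ} {T' M : Finset (Finset (Fin (c * k)))}
    (hM : UParts c k w M) (hT'M : T' ⊆ M) (hcard : T'.card = z) {e : Finset (Fin (c * k))}
    (he : e ∈ M \ T') : UParts c k (z + 1) (insert e T') ∧ insert e T' ⊆ M := by
  obtain ⟨heM, heT⟩ := Finset.mem_sdiff.mp he
  have hsub : insert e T' ⊆ M := Finset.insert_subset heM hT'M
  refine ⟨⟨by rw [Finset.card_insert_of_notMem heT, hcard], ?_, ?_⟩, hsub⟩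
  · intro f hf; exact hM.2.1 f (hsub hf)
  · intro a ha b hb hab; exact hM.2.2 a (hsub ha) b (hsub hb) hab

lemma extFam_insert {c k : ℕ} (T : Finset (Finset (Fin (c * k)))) (e : Finset (Fin (c * k))) :
    ∀ F, F ∈ extFam c k (insert e T) ↔ F ∈ extFam c k T ∧ e ∈ F := by
  intro F
  rw [mem_extFam, mem_extFam, Finset.insert_subset_iff]
  tauto

lemma E1N {c k : ℕ} (T M : Finset (Finset (Fin (c * k)))) :
    ∑ e ∈ M \ T, (extFam c k (insert e T)).card
      = ∑ F ∈ extFam c k T, ((M ∩ F) \ T).card := by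
  classical
  have h1 : ∀ e : Finset (Fin (c * k)),
      (extFam c k (insert e T)).card
        = ∑ F ∈ extFam c k T, if e ∈ F then 1 else 0 := by
    intro e
    rw [← Finset.card_filter]
    congr 1
    ext F
    rw [Finset.mem_filter]
    exact extFam_insert T e F
  calc ∑ e ∈ M \ T, (extFam c k (insert e T)).card
      = ∑ e ∈ M \ T, ∑ F ∈ extFam c k T, if e ∈ F then 1 else 0 :=
        Finset.sum_congr rfl (fun e _ => h1 e)
    _ = ∑ F ∈ extFam c k T, ∑ e ∈ M \ T, if e ∈ F then 1 else 0 := Finset.sum_comm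
    _ = ∑ F ∈ extFam c k T, ((M ∩ F) \ T).card := by
        refine Finset.sum_congr rfl (fun F _ => ?_)
        rw [← Finset.card_filter]
        congr 1
        ext s
        simp only [Finset.mem_filter, Finset.mem_sdiff, Finset.mem_inter]
        tauto

lemma E2N {c k : ℕ} (T M : Finset (Finset (Fin (c * k)))) :
    ∑ e ∈ M \ T, ∑ f ∈ (M \ T).erase e, (extFam c k (insert f (insert e T))).card
      = ∑ F ∈ extFam c k T, ((M ∩ F) \ T).card * (((M ∩ F) \ T).card - 1) := by
  classical
  have h1 : ∀ e f : Finset (Fin (c * k)),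
      (extFam c k (insert f (insert e T))).card
        = ∑ F ∈ extFam c k T, if e ∈ F ∧ f ∈ F then 1 else 0 := by
    intro e f
    rw [← Finset.card_filter]
    congr 1
    ext F
    rw [Finset.mem_filter]
    constructor
    · intro h
      obtain ⟨h2, hf⟩ := (extFam_insert (insert e T) f F).mp h
      obtain ⟨h3, he⟩ := (extFam_insert T e F).mp h2
      exact ⟨h3, he, hf⟩
    · rintro ⟨h3, he, hf⟩
      exact (extFam_insert (insert e T) f F).mpr ⟨(extFam_insert T e F).mpr ⟨h3, he⟩, hf⟩
  calc ∑ e ∈ M \ T, ∑ f ∈ (M \ T).erase e, (extFam c k (insert f (insert e T))).card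
      = ∑ e ∈ M \ T, ∑ f ∈ (M \ T).erase e, ∑ F ∈ extFam c k T,
          if e ∈ F ∧ f ∈ F then 1 else 0 :=
        Finset.sum_congr rfl (fun e _ => Finset.sum_congr rfl (fun f _ => h1 e f))
    _ = ∑ e ∈ M \ T, ∑ F ∈ extFam c k T, ∑ f ∈ (M \ T).erase e,
          if e ∈ F ∧ f ∈ F then 1 else 0 :=
        Finset.sum_congr rfl (fun e _ => Finset.sum_comm)
    _ = ∑ F ∈ extFam c k T, ∑ e ∈ M \ T, ∑ f ∈ (M \ T).erase e,
          if e ∈ F ∧ f ∈ F then 1 else 0 := Finset.sum_comm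
    _ = ∑ F ∈ extFam c k T, ((M ∩ F) \ T).card * (((M ∩ F) \ T).card - 1) := by
        refine Finset.sum_congr rfl (fun F _ => ?_)
        have hDeq : (M \ T).filter (fun s => s ∈ F) = (M ∩ F) \ T := by
          ext s
          simp only [Finset.mem_filter, Finset.mem_sdiff, Finset.mem_inter]
          tauto
        have step1 : ∀ e ∈ M \ T,
            (∑ f ∈ (M \ T).erase e, if e ∈ F ∧ f ∈ F then 1 else 0)
              = if e ∈ F then (((M ∩ F) \ T).erase e).card else 0 := by
          intro e _
          by_cases heF : e ∈ F
          · simp only [heF, true_and, if_true]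
            rw [← Finset.card_filter]
            congr 1
            ext s
            simp only [Finset.mem_filter, Finset.mem_erase, Finset.mem_sdiff,
              Finset.mem_inter]
            tauto
          · simp [heF]
        rw [Finset.sum_congr rfl step1, ← Finset.sum_filter, hDeq]
        have : ∀ e ∈ (M ∩ F) \ T, (((M ∩ F) \ T).erase e).card
            = ((M ∩ F) \ T).card - 1 := fun e he => Finset.card_erase_of_mem he
        rw [Finset.sum_congr rfl this, Finset.sum_const, smul_eq_mul]

theorem stmt17 (c k t : ℕ) (hc : 2 ≤ c) (ht : 1 ≤ t) (hk : t + 2 ≤ k)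
    (T M : Finset (Finset (Fin (c * k)))) (hT : UParts c k t T)
    (hM : UParts c k (k - 1) M) (hTM : T ⊆ M) :
    f0 c k t = (∑ i ∈ Finset.Icc 1 (k - t - 1),
        ((3 * (i : ℚ) - (i : ℚ) ^ 2) / 2) *
          ({F | UPartition c k F ∧ T ⊆ F ∧ (M ∩ F).card = t + i}.ncard : ℚ)) ∧
    f0 c k t ≤ ({F | UPartition c k F ∧ T ⊆ F ∧ (M ∩ F).card = t + 1}.ncard : ℚ) +
      ({F | UPartition c k F ∧ T ⊆ F ∧ (M ∩ F).card = t + 2}.ncard : ℚ) := by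
  classical
  set a : ℕ → ℚ :=
    fun j => (((extFam c k T).filter (fun F => (M ∩ F).card = j)).card : ℚ) with ha
  -- ncard conversion
  have hncard : ∀ i : ℕ,
      (({F | UPartition c k F ∧ T ⊆ F ∧ (M ∩ F).card = t + i} :
        Set (Finset (Finset (Fin (c * k))))).ncard : ℚ) = a (t + i) := by
    intro i
    have hset : ({F | UPartition c k F ∧ T ⊆ F ∧ (M ∩ F).card = t + i} :
        Set (Finset (Finset (Fin (c * k)))))
        = (((extFam c k T).filter (fun F => (M ∩ F).card = t + i) :
            Finset (Finset (Finset (Fin (c * k))))) : Set (Finset (Finset (Fin (c * k))))) := by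
      apply Set.ext
      intro F
      rw [Finset.mem_coe, Finset.mem_filter, mem_extFam, Set.mem_setOf_eq, and_assoc]
    rw [hset, Set.ncard_coe_finset]
  -- basic facts about members of extFam T
  have hFact : ∀ F ∈ extFam c k T, t ≤ (M ∩ F).card ∧ (M ∩ F).card ≤ k - 1 ∧
      ((M ∩ F) \ T).card = (M ∩ F).card - t := by
    intro F hF
    obtain ⟨hFp, hTF⟩ := mem_extFam.mp hF
    have hsub : T ⊆ M ∩ F := Finset.subset_inter hTM hTF
    refine ⟨hT.1 ▸ Finset.card_le_card hsub,
      hM.1 ▸ Finset.card_le_card Finset.inter_subset_left, ?_⟩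
    rw [Finset.card_sdiff_of_subset hsub, hT.1]
  have hMT : (M \ T).card = k - 1 - t := by
    rw [Finset.card_sdiff_of_subset hTM, hM.1, hT.1]
  -- theta counts
  have htheta1 : ∀ e ∈ M \ T,
      ((extFam c k (insert e T)).card : ℚ) = theta c k (t + 1) := by
    intro e he
    obtain ⟨hup, _⟩ := uparts_insert_sub hM hTM hT.1 he
    exact lemA c k (by omega) (k - (t + 1)) (t + 1) (by omega) _ hup
  have htheta2 : ∀ e ∈ M \ T, ∀ f ∈ (M \ T).erase e,
      ((extFam c k (insert f (insert e T))).card : ℚ) = theta c k (t + 2) := by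
    intro e he f hf
    obtain ⟨hup1, hsub1⟩ := uparts_insert_sub hM hTM hT.1 he
    obtain ⟨hfe, hfMT⟩ := Finset.mem_erase.mp hf
    obtain ⟨hfM, hfT⟩ := Finset.mem_sdiff.mp hfMT
    have hf' : f ∈ M \ insert e T :=
      Finset.mem_sdiff.mpr ⟨hfM, by simp [Finset.mem_insert, hfe, hfT]⟩
    obtain ⟨hup2, _⟩ := uparts_insert_sub hM hsub1 hup1.1 hf'
    exact lemA c k (by omega) (k - (t + 2)) (t + 2) (by omega) _ hup2
  -- grouping by fibers
  have group : ∀ w : ℕ → ℚ,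
      (∑ F ∈ extFam c k T, w ((M ∩ F).card))
        = ∑ j ∈ Finset.Icc t (k - 1), w j * a j := by
    intro w
    rw [← Finset.sum_fiberwise_of_maps_to
      (g := fun F => (M ∩ F).card) (t := Finset.Icc t (k - 1))
      (fun F hF => Finset.mem_Icc.mpr ⟨(hFact F hF).1, (hFact F hF).2.1⟩) _]
    refine Finset.sum_congr rfl (fun j _ => ?_)
    rw [Finset.sum_congr rfl (fun F hF => by rw [(Finset.mem_filter.mp hF).2]),
      Finset.sum_const, nsmul_eq_mul, ha, mul_comm]
  -- H1
  have H1 : ((k - 1 - t : ℕ) : ℚ) * theta c k (t + 1)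
      = ∑ j ∈ Finset.Icc t (k - 1), (((j - t : ℕ)) : ℚ) * a j := by
    calc ((k - 1 - t : ℕ) : ℚ) * theta c k (t + 1)
        = ∑ e ∈ M \ T, ((extFam c k (insert e T)).card : ℚ) := by
          rw [Finset.sum_congr rfl htheta1, Finset.sum_const, hMT, nsmul_eq_mul]
      _ = ((∑ e ∈ M \ T, (extFam c k (insert e T)).card : ℕ) : ℚ) := by
          rw [Nat.cast_sum]
      _ = ((∑ F ∈ extFam c k T, ((M ∩ F) \ T).card : ℕ) : ℚ) := by rw [E1N T M]
      _ = ∑ F ∈ extFam c k T, ((((M ∩ F).card - t : ℕ)) : ℚ) := by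
          rw [Nat.cast_sum]
          exact Finset.sum_congr rfl (fun F hF => by rw [(hFact F hF).2.2])
      _ = ∑ j ∈ Finset.Icc t (k - 1), (((j - t : ℕ)) : ℚ) * a j :=
          group (fun j => ((j - t : ℕ) : ℚ))
  -- H2
  have H2 : ((k - 1 - t : ℕ) : ℚ) * ((k - 1 - t - 1 : ℕ) : ℚ) * theta c k (t + 2)
      = ∑ j ∈ Finset.Icc t (k - 1), ((((j - t) * (j - t - 1) : ℕ)) : ℚ) * a j := by
    calc ((k - 1 - t : ℕ) : ℚ) * ((k - 1 - t - 1 : ℕ) : ℚ) * theta c k (t + 2)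
        = ∑ e ∈ M \ T, ∑ f ∈ (M \ T).erase e,
            ((extFam c k (insert f (insert e T))).card : ℚ) := by
          rw [Finset.sum_congr rfl (fun e he => by
            rw [Finset.sum_congr rfl (htheta2 e he), Finset.sum_const,
              Finset.card_erase_of_mem he, hMT, nsmul_eq_mul])]
          rw [Finset.sum_const, hMT, nsmul_eq_mul, mul_assoc]
      _ = ((∑ e ∈ M \ T, ∑ f ∈ (M \ T).erase e,
            (extFam c k (insert f (insert e T))).card : ℕ) : ℚ) := by
          rw [Nat.cast_sum]
          exact Finset.sum_congr rfl (fun e _ => by rw [Nat.cast_sum])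
      _ = ((∑ F ∈ extFam c k T,
            ((M ∩ F) \ T).card * (((M ∩ F) \ T).card - 1) : ℕ) : ℚ) := by rw [E2N T M]
      _ = ∑ F ∈ extFam c k T,
            (((((M ∩ F).card - t) * ((M ∩ F).card - t - 1) : ℕ)) : ℚ) := by
          rw [Nat.cast_sum]
          exact Finset.sum_congr rfl (fun F hF => by rw [(hFact F hF).2.2])
      _ = ∑ j ∈ Finset.Icc t (k - 1), ((((j - t) * (j - t - 1) : ℕ)) : ℚ) * a j :=
          group (fun j => (((j - t) * (j - t - 1) : ℕ) : ℚ))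
  -- reindex
  have reindex : ∀ w : ℕ → ℚ, ∑ j ∈ Finset.Icc t (k - 1), w j
      = ∑ i ∈ Finset.Icc 0 (k - 1 - t), w (t + i) := by
    intro w
    have hmap : Finset.Icc t (k - 1)
        = (Finset.Icc 0 (k - 1 - t)).map (addLeftEmbedding t) := by
      rw [Finset.map_add_left_Icc]
      congr 1
      omega
    rw [hmap, Finset.sum_map]
    exact Finset.sum_congr rfl (fun i _ => by simp [addLeftEmbedding_apply])
  have hsplit : ∀ w : ℕ → ℚ, ∑ i ∈ Finset.Icc 0 (k - 1 - t), w i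
      = w 0 + ∑ i ∈ Finset.Icc 1 (k - 1 - t), w i := by
    intro w
    have : Finset.Icc 0 (k - 1 - t) = insert 0 (Finset.Icc 1 (k - 1 - t)) := by
      ext i
      simp only [Finset.mem_Icc, Finset.mem_insert]
      omega
    rw [this, Finset.sum_insert (by simp [Finset.mem_Icc])]
  -- choose 2 cast
  have h2cast : (((k - 1 - t).choose 2 : ℕ) : ℚ)
      = ((k - 1 - t : ℕ) : ℚ) * ((k - 1 - t - 1 : ℕ) : ℚ) / 2 := by
    have hc1 : ((k - 1 - t - 1 : ℕ) : ℚ) = ((k - 1 - t : ℕ) : ℚ) - 1 := by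
      rw [Nat.cast_sub (by omega : 1 ≤ k - 1 - t)]
      norm_num
    rw [Nat.cast_choose_two, hc1]
  -- key identity
  have key : f0 c k t = ∑ i ∈ Finset.Icc 1 (k - 1 - t),
      ((3 * (i : ℚ) - (i : ℚ) ^ 2) / 2) * a (t + i) := by
    calc f0 c k t
        = (∑ j ∈ Finset.Icc t (k - 1), (((j - t : ℕ)) : ℚ) * a j)
            - (1 / 2) * ∑ j ∈ Finset.Icc t (k - 1),
              ((((j - t) * (j - t - 1) : ℕ)) : ℚ) * a j := by
          rw [← H1, ← H2, f0, show k - t - 1 = k - 1 - t from by omega, h2cast]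
          ring
      _ = ∑ j ∈ Finset.Icc t (k - 1),
            ((((j - t : ℕ)) : ℚ) - (1 / 2) * ((((j - t) * (j - t - 1) : ℕ)) : ℚ)) * a j := by
          rw [Finset.mul_sum, ← Finset.sum_sub_distrib]
          exact Finset.sum_congr rfl (fun j _ => by ring)
      _ = ∑ i ∈ Finset.Icc 0 (k - 1 - t),
            ((((t + i - t : ℕ)) : ℚ)
              - (1 / 2) * ((((t + i - t) * (t + i - t - 1) : ℕ)) : ℚ)) * a (t + i) :=
          reindex _
      _ = ∑ i ∈ Finset.Icc 1 (k - 1 - t),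
            ((3 * (i : ℚ) - (i : ℚ) ^ 2) / 2) * a (t + i) := by
          rw [hsplit]
          have h0 : ((((t + 0 - t : ℕ)) : ℚ)
              - (1 / 2) * ((((t + 0 - t) * (t + 0 - t - 1) : ℕ)) : ℚ)) * a (t + 0) = 0 := by
            simp
          rw [h0, zero_add]
          refine Finset.sum_congr rfl (fun i hi => ?_)
          have hi1 : 1 ≤ i := (Finset.mem_Icc.mp hi).1
          have e1 : t + i - t = i := by omega
          have e2 : ((i * (i - 1) : ℕ) : ℚ) = (i : ℚ) * ((i : ℚ) - 1) := by
            rw [Nat.cast_mul, Nat.cast_sub hi1]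
            norm_num
          rw [e1, e2]
          ring
  constructor
  · rw [show k - t - 1 = k - 1 - t from by omega, key]
    exact Finset.sum_congr rfl (fun i _ => by rw [hncard i])
  · rw [hncard 1, hncard 2, key]
    have hnonneg : ∀ j, (0 : ℚ) ≤ a j := fun j => Nat.cast_nonneg _
    calc ∑ i ∈ Finset.Icc 1 (k - 1 - t),
          ((3 * (i : ℚ) - (i : ℚ) ^ 2) / 2) * a (t + i)
        ≤ ∑ i ∈ Finset.Icc 1 (k - 1 - t),
            (if i = 1 ∨ i = 2 then a (t + i) else 0) := by
          refine Finset.sum_le_sum (fun i hi => ?_)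
          by_cases h12 : i = 1 ∨ i = 2
          · rcases h12 with rfl | rfl <;> (simp [if_pos]; norm_num)
          · rw [if_neg h12]
            have hi3 : (3 : ℚ) ≤ (i : ℚ) := by
              have hi1 := (Finset.mem_Icc.mp hi).1
              have : 3 ≤ i := by omega
              exact_mod_cast this
            have hcoef : (3 * (i : ℚ) - (i : ℚ) ^ 2) / 2 ≤ 0 := by nlinarith
            exact mul_nonpos_of_nonpos_of_nonneg hcoef (hnonneg _)
      _ = ∑ i ∈ (Finset.Icc 1 (k - 1 - t)).filter (fun i => i = 1 ∨ i = 2),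
            a (t + i) := (Finset.sum_filter _ _).symm
      _ ≤ ∑ i ∈ ({1, 2} : Finset ℕ), a (t + i) := by
          refine Finset.sum_le_sum_of_subset_of_nonneg ?_ (fun i _ _ => hnonneg _)
          intro i hi
          have := (Finset.mem_filter.mp hi).2
          simp only [Finset.mem_insert, Finset.mem_singleton]
          exact this
      _ = a (t + 1) + a (t + 2) := by
          rw [Finset.sum_pair (by norm_num : (1 : ℕ) ≠ 2)]
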